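/- Let k be a field of characteristic zero, N ≥ 1, and λ₁, …, λ_N ∈ k with λ_i + λ_j ≠ 0 for all i, j. In Q(N), realized as block matrices [[A,B],[B,A]], let E^i_j = [[E_ij,0],[0,E_ij]] and ΠE^i_j = [[0,E_ij],[E_ij,0]], where E_ij are the matrix units, and let Λ = [[0,D],[D,0]] with D = ½·diag(λ₁,…,λ_N). Define I on Q(N) as the super-commutator with Λ: I(X) = Λ·X − (−1)^{|X|} X·Λ for homogeneous X, and define Ĩ on Q(N) by Ĩ(E^i_j) = (2/(λ_i+λ_j))·ΠE^i_j and Ĩ(ΠE^i_j) = 0, extended linearly. Then: (i) I is an odd derivation of Q(N) which is anti-self-adjoint for the pairing g(X,Y) = otr(X·Y); (ii) Ĩ is odd and self-adjoint for this pairing; (iii) I∘Ĩ + Ĩ∘I = id on Q(N). -/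

import Mathlib

open Matrix

/-- `2N×2N` matrices over `k`, written in `N×N` block form. -/
abbrev MM (k : Type*) (N : ℕ) := Matrix (Fin N ⊕ Fin N) (Fin N ⊕ Fin N) k

variable (k : Type*) [Field k] (N : ℕ)

/-- The block matrix `J = [[0, 1],[1, 0]]`. -/
noncomputable def Jmat : MM k N := Matrix.fromBlocks 0 1 1 0

/-- The queer matrix superalgebra `Q(N)`: matrices commuting with `J`, i.e. block
matrices `[[A,B],[B,A]]`. -/
noncomputable def QN : Submodule k (MM k N) :=
  LinearMap.ker (LinearMap.mulRight k (Jmat k N) - LinearMap.mulLeft k (Jmat k N))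

/-- The upper-left block, as a linear map. -/
def blk11 : MM k N →ₗ[k] Matrix (Fin N) (Fin N) k where
  toFun X := X.toBlocks₁₁
  map_add' _ _ := rfl
  map_smul' _ _ := rfl

/-- The upper-right block, as a linear map. -/
def blk12 : MM k N →ₗ[k] Matrix (Fin N) (Fin N) k where
  toFun X := X.toBlocks₁₂
  map_add' _ _ := rfl
  map_smul' _ _ := rfl

/-- The lower-left block, as a linear map. -/
def blk21 : MM k N →ₗ[k] Matrix (Fin N) (Fin N) k where
  toFun X := X.toBlocks₂₁
  map_add' _ _ := rfl
  map_smul' _ _ := rfl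

/-- The lower-right block, as a linear map. -/
def blk22 : MM k N →ₗ[k] Matrix (Fin N) (Fin N) k where
  toFun X := X.toBlocks₂₂
  map_add' _ _ := rfl
  map_smul' _ _ := rfl

/-- The even part of `Q(N)`: block matrices `[[A,0],[0,A]]`. -/
noncomputable def QN0 : Submodule k (MM k N) :=
  QN k N ⊓ LinearMap.ker (blk12 k N) ⊓ LinearMap.ker (blk21 k N)

/-- The odd part of `Q(N)`: block matrices `[[0,B],[B,0]]`. -/
noncomputable def QN1 : Submodule k (MM k N) :=
  QN k N ⊓ LinearMap.ker (blk11 k N) ⊓ LinearMap.ker (blk22 k N)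

/-- The odd trace: `otr([[A,B],[B,A]]) = tr B`. -/
noncomputable def otr : MM k N → k := fun X => Matrix.trace X.toBlocks₁₂

/-- `X` is a homogeneous element of `Q(N)` of parity `p`. -/
noncomputable def QHomog (p : ℕ) (X : MM k N) : Prop :=
  if p % 2 = 0 then X ∈ QN0 k N else X ∈ QN1 k N

/-- The even generator `E^i_j = [[E_ij,0],[0,E_ij]]` of `Q(N)`. -/
noncomputable def Emat (i j : Fin N) : MM k N :=
  Matrix.fromBlocks (Matrix.single i j 1) 0 0 (Matrix.single i j 1)

/-- The odd generator `ΠE^i_j = [[0,E_ij],[E_ij,0]]` of `Q(N)`. -/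
noncomputable def PiE (i j : Fin N) : MM k N :=
  Matrix.fromBlocks 0 (Matrix.single i j 1) (Matrix.single i j 1) 0

/-- `Λ = [[0,D],[D,0]]` with `D = ½·diag(λ₁,…,λ_N)`. -/
noncomputable def Lambda (lam : Fin N → k) : MM k N :=
  Matrix.fromBlocks 0 (Matrix.diagonal fun i => lam i / 2)
    (Matrix.diagonal fun i => lam i / 2) 0

section AuxQueer
variable {k : Type*} [Field k] {N : ℕ}

private lemma fromBlocks_mem_QN' (A B : Matrix (Fin N) (Fin N) k) :
    Matrix.fromBlocks A B B A ∈ QN k N := by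
  simp only [QN, LinearMap.mem_ker, LinearMap.sub_apply, LinearMap.mulRight_apply,
    LinearMap.mulLeft_apply, sub_eq_zero, Jmat]
  simp [Matrix.fromBlocks_multiply]

private lemma mem_QN_iff' {X : MM k N} :
    X ∈ QN k N ↔ ∃ A B, X = Matrix.fromBlocks A B B A := by
  constructor
  · intro h
    refine ⟨X.toBlocks₁₁, X.toBlocks₁₂, ?_⟩
    simp only [QN, LinearMap.mem_ker, LinearMap.sub_apply, LinearMap.mulRight_apply,
      LinearMap.mulLeft_apply, sub_eq_zero, Jmat] at h
    rw [← Matrix.fromBlocks_toBlocks X] at h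
    simp only [Matrix.fromBlocks_multiply, mul_one, one_mul, mul_zero, zero_mul,
      add_zero, zero_add, Matrix.fromBlocks_inj] at h
    conv_lhs => rw [← Matrix.fromBlocks_toBlocks X]
    rw [← h.1, ← h.2.1]
  · rintro ⟨A, B, rfl⟩; exact fromBlocks_mem_QN' A B

private lemma fromBlocks_mem_QN0' (A : Matrix (Fin N) (Fin N) k) :
    Matrix.fromBlocks A 0 0 A ∈ QN0 k N := by
  refine Submodule.mem_inf.mpr ⟨Submodule.mem_inf.mpr ⟨fromBlocks_mem_QN' A 0, ?_⟩, ?_⟩ <;>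
    simp [LinearMap.mem_ker, blk12, blk21] <;> rfl

private lemma fromBlocks_mem_QN1' (B : Matrix (Fin N) (Fin N) k) :
    Matrix.fromBlocks 0 B B 0 ∈ QN1 k N := by
  refine Submodule.mem_inf.mpr ⟨Submodule.mem_inf.mpr ⟨fromBlocks_mem_QN' 0 B, ?_⟩, ?_⟩ <;>
    simp [LinearMap.mem_ker, blk11, blk22] <;> rfl

private lemma mem_QN0_iff' {X : MM k N} :
    X ∈ QN0 k N ↔ ∃ A, X = Matrix.fromBlocks A 0 0 A := by
  constructor
  · intro h
    rw [QN0, Submodule.mem_inf, Submodule.mem_inf] at h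
    obtain ⟨⟨hq, h12⟩, h21⟩ := h
    obtain ⟨A, B, hX⟩ := mem_QN_iff'.mp hq
    rw [LinearMap.mem_ker, hX] at h12
    have hB : B = 0 := by simpa [blk12] using (show Matrix.toBlocks₁₂ _ = 0 from h12)
    exact ⟨A, by rw [hX, hB]⟩
  · rintro ⟨A, rfl⟩; exact fromBlocks_mem_QN0' A

private lemma mem_QN1_iff' {X : MM k N} :
    X ∈ QN1 k N ↔ ∃ B, X = Matrix.fromBlocks 0 B B 0 := by
  constructor
  · intro h
    rw [QN1, Submodule.mem_inf, Submodule.mem_inf] at h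
    obtain ⟨⟨hq, h11⟩, h22⟩ := h
    obtain ⟨A, B, hX⟩ := mem_QN_iff'.mp hq
    rw [LinearMap.mem_ker, hX] at h11
    have hA : A = 0 := by simpa [blk11] using (show Matrix.toBlocks₁₁ _ = 0 from h11)
    exact ⟨B, by rw [hX, hA]⟩
  · rintro ⟨B, rfl⟩; exact fromBlocks_mem_QN1' B

private lemma fromBlocks_split (A B : Matrix (Fin N) (Fin N) k) :
    Matrix.fromBlocks A B B A =
      Matrix.fromBlocks A 0 0 A + Matrix.fromBlocks 0 B B 0 := by
  rw [Matrix.fromBlocks_add, add_zero, zero_add]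

private lemma fromBlocks_congr {A A' B B' C C' D D' : Matrix (Fin N) (Fin N) k}
    (h1 : A = A') (h2 : B = B') (h3 : C = C') (h4 : D = D') :
    Matrix.fromBlocks A B C D = Matrix.fromBlocks A' B' C' D' := by
  rw [h1, h2, h3, h4]

private def emb0' (k : Type*) [Field k] (N : ℕ) :
    Matrix (Fin N) (Fin N) k →ₗ[k] MM k N where
  toFun A := Matrix.fromBlocks A 0 0 A
  map_add' A B := by rw [Matrix.fromBlocks_add, add_zero]
  map_smul' c A := by rw [Matrix.fromBlocks_smul, smul_zero]; rfl

private def emb1' (k : Type*) [Field k] (N : ℕ) :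
    Matrix (Fin N) (Fin N) k →ₗ[k] MM k N where
  toFun B := Matrix.fromBlocks 0 B B 0
  map_add' A B := by rw [Matrix.fromBlocks_add, add_zero]
  map_smul' c A := by rw [Matrix.fromBlocks_smul, smul_zero]; rfl

private noncomputable def tilde' (lam : Fin N → k) :
    Matrix (Fin N) (Fin N) k →ₗ[k] Matrix (Fin N) (Fin N) k where
  toFun A := Matrix.of fun i j => 2 * (lam i + lam j)⁻¹ * A i j
  map_add' A B := by ext i j; simp [mul_add]
  map_smul' c A := by ext i j; simp; ring

private lemma tilde_std (lam : Fin N → k) (i j : Fin N) :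
    tilde' lam (Matrix.single i j (1 : k)) =
      (2 * (lam i + lam j)⁻¹) • Matrix.single i j (1 : k) := by
  ext a b
  simp only [tilde', LinearMap.coe_mk, AddHom.coe_mk, Matrix.of_apply,
    Matrix.smul_apply, Matrix.single, smul_eq_mul]
  split_ifs with h
  · obtain ⟨rfl, rfl⟩ := h; rfl
  · simp

private lemma map_emb0 (lam : Fin N → k) (T : MM k N →ₗ[k] MM k N)
    (hT : ∀ i j, T (Emat k N i j) = (2 * (lam i + lam j)⁻¹) • PiE k N i j)
    (A : Matrix (Fin N) (Fin N) k) :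
    T (Matrix.fromBlocks A 0 0 A) =
      Matrix.fromBlocks 0 (tilde' lam A) (tilde' lam A) 0 := by
  have key : T ∘ₗ emb0' k N = emb1' k N ∘ₗ tilde' lam := by
    apply (Matrix.stdBasis k (Fin N) (Fin N)).ext
    rintro ⟨i, j⟩
    rw [Matrix.stdBasis_eq_single]
    have e1 : emb0' k N (Matrix.single i j (1:k)) = Emat k N i j := rfl
    have e2 : emb1' k N (Matrix.single i j (1:k)) = PiE k N i j := rfl
    simp only [LinearMap.comp_apply, e1, hT, tilde_std, LinearMap.map_smul, e2]
  exact LinearMap.congr_fun key A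

private lemma map_emb1 (T : MM k N →ₗ[k] MM k N)
    (hT : ∀ i j, T (PiE k N i j) = 0) (B : Matrix (Fin N) (Fin N) k) :
    T (Matrix.fromBlocks 0 B B 0) = 0 := by
  have key : T ∘ₗ emb1' k N = 0 := by
    apply (Matrix.stdBasis k (Fin N) (Fin N)).ext
    rintro ⟨i, j⟩
    rw [Matrix.stdBasis_eq_single]
    have e2 : emb1' k N (Matrix.single i j (1:k)) = PiE k N i j := rfl
    simp only [LinearMap.comp_apply, e2, hT, LinearMap.zero_apply]
  exact LinearMap.congr_fun key B

private lemma otr_fromBlocks (A B C D : Matrix (Fin N) (Fin N) k) :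
    otr k N (Matrix.fromBlocks A B C D) = Matrix.trace B := by
  simp [otr]

end AuxQueer

/-- Let `I` be the super-commutator with `Λ` (`I X = ΛX − XΛ` on even
`X`, `I X = ΛX + XΛ` on odd `X`) and `Ĩ` be determined by
`Ĩ(E^i_j) = (2/(λ_i+λ_j))·ΠE^i_j`, `Ĩ(ΠE^i_j) = 0`. Then on `Q(N)`:
(i) `I` is an odd derivation, anti-self-adjoint for `g(X,Y) = otr(XY)`;
(ii) `Ĩ` is odd and self-adjoint; (iii) `I∘Ĩ + Ĩ∘I = id`. -/
theorem queer_algebra_supersymmetry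
    (k : Type*) [Field k] [CharZero k] (N : ℕ) (hN : 1 ≤ N)
    (lam : Fin N → k) (hlam : ∀ i j, lam i + lam j ≠ 0)
    (Iop Itil : MM k N →ₗ[k] MM k N)
    (hI0 : ∀ X ∈ QN0 k N, Iop X = Lambda k N lam * X - X * Lambda k N lam)
    (hI1 : ∀ X ∈ QN1 k N, Iop X = Lambda k N lam * X + X * Lambda k N lam)
    (hItE : ∀ i j, Itil (Emat k N i j) = (2 * (lam i + lam j)⁻¹) • PiE k N i j)
    (hItPi : ∀ i j, Itil (PiE k N i j) = 0) :
    ((∀ X ∈ QN0 k N, Iop X ∈ QN1 k N) ∧ (∀ X ∈ QN1 k N, Iop X ∈ QN0 k N) ∧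
     (∀ (p : ℕ) (X : MM k N), QHomog k N p X → ∀ Y ∈ QN k N,
        Iop (X * Y) = Iop X * Y + (-1 : k) ^ p • (X * Iop Y)) ∧
     (∀ (p : ℕ) (X : MM k N), QHomog k N p X → ∀ Y ∈ QN k N,
        otr k N (Iop X * Y) + (-1 : k) ^ p * otr k N (X * Iop Y) = 0)) ∧
    ((∀ X ∈ QN0 k N, Itil X ∈ QN1 k N) ∧ (∀ X ∈ QN1 k N, Itil X ∈ QN0 k N) ∧
     (∀ (p : ℕ) (X : MM k N), QHomog k N p X → ∀ Y ∈ QN k N,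
        otr k N (Itil X * Y) = (-1 : k) ^ p * otr k N (X * Itil Y))) ∧
    (∀ X ∈ QN k N, Iop (Itil X) + Itil (Iop X) = X) := by
  classical
  set D : Matrix (Fin N) (Fin N) k := Matrix.diagonal (fun i => lam i / 2) with hD
  have hLam : Lambda k N lam = Matrix.fromBlocks 0 D D 0 := rfl
  have hIE : ∀ A : Matrix (Fin N) (Fin N) k,
      Iop (Matrix.fromBlocks A 0 0 A) =
        Matrix.fromBlocks 0 (D * A - A * D) (D * A - A * D) 0 := by
    intro A
    rw [hI0 _ (fromBlocks_mem_QN0' A), hLam]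
    simp only [Matrix.fromBlocks_multiply, sub_eq_add_neg, Matrix.fromBlocks_neg,
      Matrix.fromBlocks_add]
    exact fromBlocks_congr (by first | noncomm_ring | abel) (by first | noncomm_ring | abel) (by first | noncomm_ring | abel)
      (by first | noncomm_ring | abel)
  have hIPi : ∀ B : Matrix (Fin N) (Fin N) k,
      Iop (Matrix.fromBlocks 0 B B 0) =
        Matrix.fromBlocks (D * B + B * D) 0 0 (D * B + B * D) := by
    intro B
    rw [hI1 _ (fromBlocks_mem_QN1' B), hLam]
    simp only [Matrix.fromBlocks_multiply, Matrix.fromBlocks_add]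
    exact fromBlocks_congr (by first | noncomm_ring | abel) (by first | noncomm_ring | abel) (by first | noncomm_ring | abel)
      (by first | noncomm_ring | abel)
  have hIfull : ∀ A B : Matrix (Fin N) (Fin N) k,
      Iop (Matrix.fromBlocks A B B A) =
        Matrix.fromBlocks (D * B + B * D) (D * A - A * D) (D * A - A * D)
          (D * B + B * D) := by
    intro A B
    rw [fromBlocks_split, map_add, hIE, hIPi, Matrix.fromBlocks_add]
    exact fromBlocks_congr (by first | noncomm_ring | abel) (by first | noncomm_ring | abel) (by first | noncomm_ring | abel)
      (by first | noncomm_ring | abel)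
  have hTE : ∀ A : Matrix (Fin N) (Fin N) k,
      Itil (Matrix.fromBlocks A 0 0 A) =
        Matrix.fromBlocks 0 (tilde' lam A) (tilde' lam A) 0 := map_emb0 lam Itil hItE
  have hTPi : ∀ B : Matrix (Fin N) (Fin N) k,
      Itil (Matrix.fromBlocks 0 B B 0) = 0 := map_emb1 Itil hItPi
  have hTfull : ∀ A B : Matrix (Fin N) (Fin N) k,
      Itil (Matrix.fromBlocks A B B A) =
        Matrix.fromBlocks 0 (tilde' lam A) (tilde' lam A) 0 := by
    intro A B
    rw [fromBlocks_split, map_add, hTE, hTPi, add_zero]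
  refine ⟨⟨?_, ?_, ?_, ?_⟩, ⟨?_, ?_, ?_⟩, ?_⟩
  · -- I maps even to odd
    intro X hX
    obtain ⟨A, rfl⟩ := mem_QN0_iff'.mp hX
    rw [hIE]
    exact fromBlocks_mem_QN1' _
  · -- I maps odd to even
    intro X hX
    obtain ⟨B, rfl⟩ := mem_QN1_iff'.mp hX
    rw [hIPi]
    exact fromBlocks_mem_QN0' _
  · -- I is an odd derivation
    intro p X hX Y hY
    obtain ⟨A', B', rfl⟩ := mem_QN_iff'.mp hY
    rcases Nat.even_or_odd p with hp | hp
    · have hX0 : X ∈ QN0 k N := by simpa [QHomog, Nat.even_iff.mp hp] using hX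
      obtain ⟨A, rfl⟩ := mem_QN0_iff'.mp hX0
      rw [hp.neg_one_pow, one_smul]
      have hm : Matrix.fromBlocks A 0 0 A * Matrix.fromBlocks A' B' B' A' =
          Matrix.fromBlocks (A * A') (A * B') (A * B') (A * A') := by
        rw [Matrix.fromBlocks_multiply]
        exact fromBlocks_congr (by first | noncomm_ring | abel) (by first | noncomm_ring | abel) (by first | noncomm_ring | abel)
          (by first | noncomm_ring | abel)
      rw [hm, hIfull (A * A') (A * B'), hIE A, hIfull A' B',
        Matrix.fromBlocks_multiply, Matrix.fromBlocks_multiply, Matrix.fromBlocks_add]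
      exact fromBlocks_congr (by first | noncomm_ring | abel) (by first | noncomm_ring | abel) (by first | noncomm_ring | abel)
        (by first | noncomm_ring | abel)
    · have hX1 : X ∈ QN1 k N := by simpa [QHomog, Nat.odd_iff.mp hp] using hX
      obtain ⟨B, rfl⟩ := mem_QN1_iff'.mp hX1
      rw [hp.neg_one_pow, neg_one_smul]
      have hm : Matrix.fromBlocks 0 B B 0 * Matrix.fromBlocks A' B' B' A' =
          Matrix.fromBlocks (B * B') (B * A') (B * A') (B * B') := by
        rw [Matrix.fromBlocks_multiply]
        exact fromBlocks_congr (by first | noncomm_ring | abel) (by first | noncomm_ring | abel) (by first | noncomm_ring | abel)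
          (by first | noncomm_ring | abel)
      rw [hm, hIfull (B * B') (B * A'), hIPi B, hIfull A' B',
        Matrix.fromBlocks_multiply, Matrix.fromBlocks_multiply, Matrix.fromBlocks_neg,
        Matrix.fromBlocks_add]
      exact fromBlocks_congr (by first | noncomm_ring | abel) (by first | noncomm_ring | abel) (by first | noncomm_ring | abel)
        (by first | noncomm_ring | abel)
  · -- I is anti-self-adjoint
    intro p X hX Y hY
    obtain ⟨A', B', rfl⟩ := mem_QN_iff'.mp hY
    rcases Nat.even_or_odd p with hp | hp
    · have hX0 : X ∈ QN0 k N := by simpa [QHomog, Nat.even_iff.mp hp] using hX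
      obtain ⟨A, rfl⟩ := mem_QN0_iff'.mp hX0
      rw [hp.neg_one_pow, one_mul, hIE A, hIfull A' B',
        Matrix.fromBlocks_multiply, Matrix.fromBlocks_multiply,
        otr_fromBlocks, otr_fromBlocks]
      have key : Matrix.trace (D * (A * A')) = Matrix.trace (A * (A' * D)) := by
        rw [Matrix.trace_mul_comm, Matrix.mul_assoc]
      simp only [Matrix.zero_mul, Matrix.mul_zero, zero_mul, mul_zero, zero_add, add_zero,
        Matrix.sub_mul, Matrix.mul_sub, Matrix.trace_sub, Matrix.trace_add, Matrix.mul_assoc]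
      linear_combination key
    · have hX1 : X ∈ QN1 k N := by simpa [QHomog, Nat.odd_iff.mp hp] using hX
      obtain ⟨B, rfl⟩ := mem_QN1_iff'.mp hX1
      rw [hp.neg_one_pow, hIPi B, hIfull A' B',
        Matrix.fromBlocks_multiply, Matrix.fromBlocks_multiply,
        otr_fromBlocks, otr_fromBlocks]
      have key : Matrix.trace (D * (B * B')) = Matrix.trace (B * (B' * D)) := by
        rw [Matrix.trace_mul_comm, Matrix.mul_assoc]
      simp only [Matrix.zero_mul, Matrix.mul_zero, zero_mul, mul_zero, zero_add, add_zero,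
        Matrix.add_mul, Matrix.mul_add, Matrix.trace_add, Matrix.mul_assoc]
      linear_combination key
  · -- Itil maps even to odd
    intro X hX
    obtain ⟨A, rfl⟩ := mem_QN0_iff'.mp hX
    rw [hTE]
    exact fromBlocks_mem_QN1' _
  · -- Itil maps odd to even
    intro X hX
    obtain ⟨B, rfl⟩ := mem_QN1_iff'.mp hX
    rw [hTPi]
    exact Submodule.zero_mem _
  · -- Itil is self-adjoint
    intro p X hX Y hY
    obtain ⟨A', B', rfl⟩ := mem_QN_iff'.mp hY
    rcases Nat.even_or_odd p with hp | hp
    · have hX0 : X ∈ QN0 k N := by simpa [QHomog, Nat.even_iff.mp hp] using hX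
      obtain ⟨A, rfl⟩ := mem_QN0_iff'.mp hX0
      rw [hp.neg_one_pow, one_mul, hTE A, hTfull A' B',
        Matrix.fromBlocks_multiply, Matrix.fromBlocks_multiply,
        otr_fromBlocks, otr_fromBlocks]
      simp only [Matrix.zero_mul, Matrix.mul_zero, zero_mul, mul_zero, zero_add, add_zero]
      simp only [Matrix.trace, Matrix.diag_apply, Matrix.mul_apply, tilde',
        LinearMap.coe_mk, AddHom.coe_mk, Matrix.of_apply]
      refine Finset.sum_congr rfl fun i _ => Finset.sum_congr rfl fun j _ => ?_
      rw [add_comm (lam j) (lam i)]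
      ring
    · have hX1 : X ∈ QN1 k N := by simpa [QHomog, Nat.odd_iff.mp hp] using hX
      obtain ⟨B, rfl⟩ := mem_QN1_iff'.mp hX1
      rw [hTPi B, zero_mul, hTfull A' B', Matrix.fromBlocks_multiply, otr_fromBlocks]
      have h0 : otr k N (0 : MM k N) = 0 := by
        rw [← Matrix.fromBlocks_zero, otr_fromBlocks, Matrix.trace_zero]
      rw [h0]
      simp
  · -- I ∘ Itil + Itil ∘ I = id on Q(N)
    intro X hX
    obtain ⟨A, B, rfl⟩ := mem_QN_iff'.mp hX
    have k1 : D * tilde' lam A + tilde' lam A * D = A := by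
      ext i j
      rw [hD]
      simp only [Matrix.add_apply, Matrix.diagonal_mul, Matrix.mul_diagonal, tilde',
        LinearMap.coe_mk, AddHom.coe_mk, Matrix.of_apply]
      have hne := hlam i j
      field_simp
    have k2 : tilde' lam (D * B + B * D) = B := by
      ext i j
      rw [hD]
      simp only [tilde', LinearMap.coe_mk, AddHom.coe_mk, Matrix.of_apply,
        Matrix.add_apply, Matrix.diagonal_mul, Matrix.mul_diagonal]
      have hne := hlam i j
      field_simp
    rw [hTfull A B, hIPi (tilde' lam A), hIfull A B,
      hTfull (D * B + B * D) (D * A - A * D), Matrix.fromBlocks_add]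
    exact fromBlocks_congr (by rw [add_zero]; exact k1) (by rw [zero_add]; exact k2)
      (by rw [zero_add]; exact k2) (by rw [add_zero]; exact k1)
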